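/- For the double series S_{C1,C2}(x;q) = Σ_{m,n≥0} q^{B11·C(m+1,2)+B22·C(n+1,2)+B12·mn+C1·m+C2·n} x^{D1·m+D2·n} / ((q^{K1};q^{K1})_m (q^{K2};q^{K2})_n), and any positive integer γ, one has S_{C1,C2}(x) − S_{C1+K1,C2}(x) = x^{D1} q^{B11+C1} S_{C1+B11−γD1, C2+B12−γD2}(xq^γ). -/

import Mathlib

noncomputable section

/-- Base coefficient ring: formal Laurent series over ℚ (a field), so that
integer powers of `q` and inverses of Pochhammer symbols make sense. -/
abbrev R : Type := LaurentSeries ℚ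

/-- The formal variable `q`. -/
def q : R := HahnSeries.single 1 1

/-- The finite q-Pochhammer symbol `(a; b)_n = ∏_{j=1}^n (1 - a b^(j-1))`. -/
def poch (a b : R) (n : ℕ) : R := ∏ j ∈ Finset.range n, (1 - a * b ^ j)

/-- Formal substitution `x ↦ c·x` in a power series in `x` over `R`. -/
def subst (c : R) (f : PowerSeries R) : PowerSeries R :=
  PowerSeries.mk fun k => c ^ k * PowerSeries.coeff k f

/-- The double series `S_{C1,C2}(x;q)`, viewed as a power series in `x` over `R`:
the coefficient of `x^k` collects all `(m,n)` with `D1·m + D2·n = k`, each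
contributing `q^(B11·C(m+1,2)+B22·C(n+1,2)+B12·mn+C1·m+C2·n) / ((q^K1;q^K1)_m (q^K2;q^K2)_n)`. -/
def S (B11 B22 B12 C1 C2 : ℤ) (D1 D2 K1 K2 : ℕ) : PowerSeries R :=
  PowerSeries.mk fun k =>
    ∑ p ∈ (Finset.range (k+1) ×ˢ Finset.range (k+1)).filter
        (fun p => D1 * p.1 + D2 * p.2 = k),
      q ^ (B11 * ((p.1+1).choose 2 : ℤ) + B22 * ((p.2+1).choose 2 : ℤ)
            + B12 * (p.1 : ℤ) * (p.2 : ℤ) + C1 * (p.1 : ℤ) + C2 * (p.2 : ℤ))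
        * (poch (q ^ K1) (q ^ K1) p.1)⁻¹ * (poch (q ^ K2) (q ^ K2) p.2)⁻¹


lemma q_pow (n : ℕ) : q ^ n = HahnSeries.single (n : ℤ) 1 := by
  induction n with
  | zero => simp [q]
  | succ n ih =>
    rw [pow_succ, ih, q, HahnSeries.single_mul_single]
    push_cast; ring_nf

lemma q_ne_zero : q ≠ 0 := by
  intro h
  have := congrArg (fun f => HahnSeries.coeff f 1) h
  simp [q] at this

lemma one_sub_q_pow_ne_zero {n : ℕ} (hn : 0 < n) : (1 : R) - q ^ n ≠ 0 := by
  intro h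
  have := congrArg (fun f => HahnSeries.coeff f 0) h
  have hne : (0 : ℤ) ≠ n := by exact_mod_cast hn.ne
  simp [q_pow, HahnSeries.coeff_single, hne] at this

lemma poch_succ (K m : ℕ) :
    poch (q ^ K) (q ^ K) (m + 1) = poch (q ^ K) (q ^ K) m * (1 - q ^ (K * (m + 1))) := by
  rw [poch, Finset.prod_range_succ, poch, ← pow_mul, ← pow_add]
  congr 2
  ring

lemma poch_ne_zero {K : ℕ} (hK : 0 < K) (m : ℕ) : poch (q ^ K) (q ^ K) m ≠ 0 := by
  rw [poch]
  refine Finset.prod_ne_zero_iff.2 fun j _ => ?_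
  rw [← pow_mul, ← pow_add]
  exact one_sub_q_pow_ne_zero (by positivity)

theorem first_primary_contiguous_relation
    (B11 B22 B12 C1 C2 : ℤ) (D1 D2 K1 K2 γ : ℕ)
    (hD1 : 0 < D1) (hD2 : 0 < D2) (hK1 : 0 < K1) (hK2 : 0 < K2) (hγ : 0 < γ) :
    S B11 B22 B12 C1 C2 D1 D2 K1 K2 - S B11 B22 B12 (C1 + K1) C2 D1 D2 K1 K2
      = PowerSeries.X ^ D1 * PowerSeries.C (q ^ (B11 + C1)) *
          subst (q ^ γ)
            (S B11 B22 B12 (C1 + B11 - (γ : ℤ) * D1) (C2 + B12 - (γ : ℤ) * D2)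
              D1 D2 K1 K2) := by
  rw [mul_assoc]
  refine PowerSeries.ext fun k => ?_
  rw [map_sub, PowerSeries.coeff_X_pow_mul', S, S, PowerSeries.coeff_mk,
    PowerSeries.coeff_mk, ← Finset.sum_sub_distrib]
  by_cases hk : D1 ≤ k
  · rw [if_pos hk, PowerSeries.coeff_C_mul, subst, PowerSeries.coeff_mk, S,
      PowerSeries.coeff_mk, Finset.mul_sum, Finset.mul_sum]
    refine Eq.trans (Finset.sum_filter_of_ne (p := fun p => p.1 ≠ 0) fun p hp hf => by
      intro h1
      apply hf
      simp only [h1]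
      norm_num).symm ?_
    refine (Finset.sum_nbij' (i := fun p => (p.1 + 1, p.2))
      (j := fun p => (p.1 - 1, p.2)) ?_ ?_ ?_ ?_ ?_).symm
    · intro p hp
      simp only [Finset.mem_filter, Finset.mem_product, Finset.mem_range] at hp ⊢
      have a1 : p.1 ≤ D1 * p.1 := Nat.le_mul_of_pos_left _ hD1
      have a2 : p.2 ≤ D2 * p.2 := Nat.le_mul_of_pos_left _ hD2
      have a3 : D1 * (p.1 + 1) = D1 * p.1 + D1 := by ring
      omega
    · intro p hp
      simp only [Finset.mem_filter, Finset.mem_product, Finset.mem_range] at hp ⊢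
      obtain ⟨m, hm⟩ : ∃ m, p.1 = m + 1 := ⟨p.1 - 1, by omega⟩
      simp only [hm] at hp ⊢
      have a1 : m ≤ D1 * m := Nat.le_mul_of_pos_left _ hD1
      have a2 : p.2 ≤ D2 * p.2 := Nat.le_mul_of_pos_left _ hD2
      have a3 : D1 * (m + 1) = D1 * m + D1 := by ring
      simp only [Nat.add_sub_cancel]
      omega
    · intro p hp
      simp
    · intro p hp
      simp only [Finset.mem_filter, Finset.mem_product, Finset.mem_range] at hp
      have : p.1 - 1 + 1 = p.1 := by omega
      simp [this]
    · intro p hp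
      simp only [Finset.mem_filter, Finset.mem_product, Finset.mem_range] at hp
      obtain ⟨⟨h1, h2⟩, hd⟩ := hp
      obtain ⟨m, n⟩ := p
      simp only at h1 h2 hd ⊢
      have hQ : (1 : R) - q ^ (K1 * (m + 1)) ≠ 0 := one_sub_q_pow_ne_zero (by positivity)
      have hPm : poch (q ^ K1) (q ^ K1) m ≠ 0 := poch_ne_zero hK1 m
      have hPn : poch (q ^ K2) (q ^ K2) n ≠ 0 := poch_ne_zero hK2 n
      have hch : (m + 1 + 1).choose 2 = (m + 1).choose 2 + (m + 1) := by
        rw [Nat.choose_succ_succ, Nat.choose_one_right]; ring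
      rw [← hd, poch_succ K1 m, hch]
      field_simp
      rw [← pow_mul]
      simp only [← zpow_natCast q, ← zpow_add₀ q_ne_zero]
      push_cast
      ring_nf
      simp only [zpow_add₀ q_ne_zero]
      ring_nf
  · rw [if_neg hk]
    refine Finset.sum_eq_zero fun p hp => ?_
    simp only [Finset.mem_filter, Finset.mem_product, Finset.mem_range] at hp
    have h1 : p.1 = 0 := by
      by_contra h
      have h2 : D1 ≤ D1 * p.1 := Nat.le_mul_of_pos_right D1 (Nat.pos_of_ne_zero h)
      omega
    simp only [h1]
    norm_num
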